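/- arXiv:1911.01478 — 6 statements merged into one kernel-verified Lean document; each statement's English description precedes it below -/
import Mathlib

section
/- For every graph G and every weight vector c on the vertices, if x is a c-maximal point of the edge relaxation R_edge(G) = {x in [0,1]^V : x_u + x_v <= 1 for every edge {u,v}}, then there exists a c-maximal characteristic vector y of a stable set of G such that y_v = x_v for every vertex v with x_v in {0,1}. -/
def edgeRelax {V : Type*} (G : SimpleGraph V) : Set (V → ℝ) :=
  {x | (∀ v, 0 ≤ x v ∧ x v ≤ 1) ∧ ∀ u v, G.Adj u v → x u + x v ≤ 1}

def IsStable {V : Type*} (G : SimpleGraph V) (S : Finset V) : Prop :=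
  ∀ u ∈ S, ∀ v ∈ S, ¬ G.Adj u v

noncomputable def chi {V : Type*} [DecidableEq V] (S : Finset V) : V → ℝ :=
  fun v => if v ∈ S then 1 else 0

/-- Nemhauser–Trotter persistency for the edge relaxation. -/
theorem stmt0 {V : Type*} [Fintype V] [DecidableEq V] (G : SimpleGraph V)
    (c : V → ℝ) (x : V → ℝ) (hx : x ∈ edgeRelax G)
    (hmax : ∀ y ∈ edgeRelax G, ∑ v, c v * y v ≤ ∑ v, c v * x v) :
    ∃ S : Finset V, IsStable G S ∧
      (∀ T : Finset V, IsStable G T → ∑ v ∈ T, c v ≤ ∑ v ∈ S, c v) ∧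
      (∀ v, (x v = 0 ∨ x v = 1) → chi S v = x v) := by
  classical
  obtain ⟨hxb, hxe⟩ := hx
  -- a maximum-weight stable set T₀
  obtain ⟨T₀, hT₀mem, hT₀max⟩ :=
    Finset.exists_max_image
      ((Finset.univ : Finset (Finset V)).filter (fun T => IsStable G T))
      (fun T => ∑ v ∈ T, c v) ⟨∅, Finset.mem_filter.mpr ⟨Finset.mem_univ _, by simp [IsStable]⟩⟩
  have hT₀stable : IsStable G T₀ := (Finset.mem_filter.mp hT₀mem).2
  have hT₀max' : ∀ T : Finset V, IsStable G T → ∑ v ∈ T, c v ≤ ∑ v ∈ T₀, c v := by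
    intro T hT
    exact hT₀max T (Finset.mem_filter.mpr ⟨Finset.mem_univ _, hT⟩)
  set D : Finset V := T₀.filter (fun v => x v = 0) with hDdef
  set E : Finset V := Finset.univ.filter (fun v => x v = 1 ∧ v ∉ T₀) with hEdef
  have hDmem : ∀ v ∈ D, v ∈ T₀ ∧ x v = 0 := fun v hv => Finset.mem_filter.mp hv
  have hEmem : ∀ v ∈ E, x v = 1 ∧ v ∉ T₀ := fun v hv => (Finset.mem_filter.mp hv).2
  -- key inequality
  have hkey : ∑ v ∈ D, c v ≤ ∑ v ∈ E, c v := by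
    by_contra hcon
    push_neg at hcon
    -- build ε
    set M : Finset ℝ :=
      insert (1 : ℝ) ((Finset.univ.filter (fun v => x v < 1)).image (fun v => 1 - x v))
        with hMdef
    have hMne : M.Nonempty := ⟨1, Finset.mem_insert_self _ _⟩
    set ε : ℝ := M.min' hMne with hεdef
    have hεpos : 0 < ε := by
      have hmem := M.min'_mem hMne
      rcases Finset.mem_insert.mp hmem with h | h
      · rw [hεdef] at *; rw [h]; norm_num
      · obtain ⟨v, hv, hveq⟩ := Finset.mem_image.mp h
        have : x v < 1 := (Finset.mem_filter.mp hv).2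
        rw [hεdef] at *; rw [← hveq]; linarith
    have hε1 : ε ≤ 1 := M.min'_le 1 (Finset.mem_insert_self _ _)
    have hεv : ∀ v, x v < 1 → ε ≤ 1 - x v := by
      intro v hv
      exact M.min'_le _ (Finset.mem_insert_of_mem
        (Finset.mem_image_of_mem _ (Finset.mem_filter.mpr ⟨Finset.mem_univ _, hv⟩)))
    set y : V → ℝ := fun v => if v ∈ D then x v + ε else if v ∈ E then x v - ε else x v
      with hydef
    have hyD : ∀ v ∈ D, y v = ε := by
      intro v hv; simp only [hydef, if_pos hv, (hDmem v hv).2, zero_add]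
    have hyE : ∀ v ∈ E, y v = 1 - ε := by
      intro v hv
      have hvD : v ∉ D := by
        intro h; have := (hDmem v h).2; have := (hEmem v hv).1; linarith
      simp only [hydef, if_neg hvD, if_pos hv, (hEmem v hv).1]
    have hyle : ∀ v, v ∉ D → y v ≤ x v := by
      intro v hv
      by_cases hvE : v ∈ E
      · simp only [hydef, if_neg hv, if_pos hvE]; linarith
      · simp only [hydef, if_neg hv, if_neg hvE]; exact le_refl _
    have hymem : y ∈ edgeRelax G := by
      constructor
      · intro v
        by_cases hvD : v ∈ D
        · rw [hyD v hvD]; exact ⟨le_of_lt hεpos, hε1⟩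
        · by_cases hvE : v ∈ E
          · rw [hyE v hvE]; constructor <;> linarith
          · simp only [hydef, if_neg hvD, if_neg hvE]; exact hxb v
      · intro u v hadj
        by_cases huD : u ∈ D
        · by_cases hvD : v ∈ D
          · exact absurd hadj (hT₀stable u (hDmem u huD).1 v (hDmem v hvD).1)
          · rw [hyD u huD]
            by_cases hvE : v ∈ E
            · rw [hyE v hvE]; linarith
            · have hv1 : x v < 1 := by
                rcases lt_or_eq_of_le (hxb v).2 with h | h
                · exact h
                · exfalso
                  by_cases hvT : v ∈ T₀
                  · exact (hT₀stable u (hDmem u huD).1 v hvT) hadj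
                  · exact hvE (Finset.mem_filter.mpr ⟨Finset.mem_univ _, h, hvT⟩)
              have := hεv v hv1
              simp only [hydef, if_neg hvD, if_neg hvE]
              linarith
        · by_cases hvD : v ∈ D
          · rw [hyD v hvD]
            by_cases huE : u ∈ E
            · rw [hyE u huE]; linarith
            · have hu1 : x u < 1 := by
                rcases lt_or_eq_of_le (hxb u).2 with h | h
                · exact h
                · exfalso
                  by_cases huT : u ∈ T₀
                  · exact (hT₀stable u huT v (hDmem v hvD).1) hadj
                  · exact huE (Finset.mem_filter.mpr ⟨Finset.mem_univ _, h, huT⟩)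
              have := hεv u hu1
              simp only [hydef, if_neg huD, if_neg huE]
              linarith
          · have h1 := hyle u huD
            have h2 := hyle v hvD
            have := hxe u v hadj
            linarith
    have hsum : ∑ v, c v * y v
        = ∑ v, c v * x v + ε * (∑ v ∈ D, c v) - ε * (∑ v ∈ E, c v) := by
      have h1 : ∀ v, c v * y v
          = c v * x v + (if v ∈ D then ε * c v else 0) - (if v ∈ E then ε * c v else 0) := by
        intro v
        by_cases hvD : v ∈ D
        · have hvE : v ∉ E := by
            intro h; have := (hDmem v hvD).2; have := (hEmem v h).1; linarith
          simp only [hydef, if_pos hvD, if_neg hvE]; ring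
        · by_cases hvE : v ∈ E
          · simp only [hydef, if_neg hvD, if_pos hvE]; ring
          · simp only [hydef, if_neg hvD, if_neg hvE]; ring
      calc ∑ v, c v * y v
          = ∑ v, (c v * x v + (if v ∈ D then ε * c v else 0)
              - (if v ∈ E then ε * c v else 0)) := by
            exact Finset.sum_congr rfl (fun v _ => h1 v)
        _ = ∑ v, c v * x v + ∑ v, (if v ∈ D then ε * c v else 0)
              - ∑ v, (if v ∈ E then ε * c v else 0) := by
            rw [Finset.sum_sub_distrib, Finset.sum_add_distrib]
        _ = ∑ v, c v * x v + ε * (∑ v ∈ D, c v) - ε * (∑ v ∈ E, c v) := by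
            rw [Finset.sum_ite_mem, Finset.sum_ite_mem, Finset.univ_inter,
              Finset.univ_inter, Finset.mul_sum, Finset.mul_sum]
    have := hmax y hymem
    rw [hsum] at this
    have hmul : ε * (∑ v ∈ E, c v) < ε * (∑ v ∈ D, c v) :=
      mul_lt_mul_of_pos_left hcon hεpos
    linarith
  -- the stable set S
  set A : Finset V := T₀.filter (fun v => x v ≠ 0) with hAdef
  set B : Finset V := Finset.univ.filter (fun v => x v = 1) with hBdef
  refine ⟨A ∪ B, ?_, ?_, ?_⟩
  · -- stability
    intro u hu v hv hadj
    have hmemA : ∀ w ∈ A, w ∈ T₀ ∧ x w ≠ 0 := fun w hw => Finset.mem_filter.mp hw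
    have hmemB : ∀ w ∈ B, x w = 1 := fun w hw => (Finset.mem_filter.mp hw).2
    have hsum := hxe u v hadj
    rcases Finset.mem_union.mp hu with huA | huB
    · rcases Finset.mem_union.mp hv with hvA | hvB
      · exact (hT₀stable u (hmemA u huA).1 v (hmemA v hvA).1) hadj
      · have h1 := hmemB v hvB
        have h2 := (hmemA u huA).2
        have h0 := (hxb u).1
        have : x u = 0 := by linarith
        exact h2 this
    · have h1 := hmemB u huB
      rcases Finset.mem_union.mp hv with hvA | hvB
      · have h2 := (hmemA v hvA).2
        have h0 := (hxb v).1
        have : x v = 0 := by linarith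
        exact h2 this
      · have h2 := hmemB v hvB
        linarith
  · -- maximality
    intro T hT
    have h1 : ∑ v ∈ T, c v ≤ ∑ v ∈ T₀, c v := hT₀max' T hT
    have hsplit : ∑ v ∈ D, c v + ∑ v ∈ A, c v = ∑ v ∈ T₀, c v := by
      rw [hDdef, hAdef]
      exact Finset.sum_filter_add_sum_filter_not T₀ (fun v => x v = 0) c
    have hBA : B \ A = E := by
      ext v
      simp only [hBdef, hEdef, hAdef, Finset.mem_sdiff, Finset.mem_filter, Finset.mem_univ,
        true_and]
      constructor
      · rintro ⟨h1, h2⟩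
        refine ⟨h1, fun hT₀ => h2 ⟨hT₀, by rw [h1]; norm_num⟩⟩
      · rintro ⟨h1, h2⟩
        exact ⟨h1, fun h => h2 h.1⟩
    have hunion : ∑ v ∈ A ∪ B, c v = ∑ v ∈ A, c v + ∑ v ∈ B \ A, c v := by
      rw [← Finset.union_sdiff_self_eq_union]
      exact Finset.sum_union Finset.disjoint_sdiff
    rw [hunion, hBA]
    linarith
  · -- agreement on integral coordinates
    intro v hv
    rcases hv with h0 | h1
    · have hvA : v ∉ A := by
        intro h; exact (Finset.mem_filter.mp h).2 h0
      have hvB : v ∉ B := by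
        intro h
        have := (Finset.mem_filter.mp h).2
        rw [h0] at this; norm_num at this
      have : v ∉ A ∪ B := fun h => (Finset.mem_union.mp h).elim hvA hvB
      simp [chi, this, h0]
    · have hvB : v ∈ B := Finset.mem_filter.mpr ⟨Finset.mem_univ _, h1⟩
      have : v ∈ A ∪ B := Finset.mem_union_right _ hvB
      simp [chi, this, h1]
end

section
/- Let P and Q be polytopes in R^n. If there exists a vector c in R^n such that the dimension of the optimal face of Q induced by c is strictly smaller than the dimension of the optimal face of P induced by c, then there exists a vector c' in R^n such that the optimal face of Q induced by c' is a vertex of Q, while the optimal face of P induced by c' is not a vertex of P. -/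
/-- The optimal face of `P` induced by the objective `c`. -/
def optFace {n : ℕ} (P : Set (Fin n → ℝ)) (c : Fin n → ℝ) : Set (Fin n → ℝ) :=
  {x | x ∈ P ∧ ∀ y ∈ P, ∑ i, c i * y i ≤ ∑ i, c i * x i}

/-- Dimension of a subset of `ℝⁿ` (dimension of its affine hull). -/
noncomputable def dimSet {n : ℕ} (s : Set (Fin n → ℝ)) : ℕ :=
  Module.finrank ℝ ↥(vectorSpan ℝ s)

namespace Stmt1Aux

open Finset

variable {n : ℕ}

def dot (c x : Fin n → ℝ) : ℝ := ∑ i, c i * x i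

lemma dot_add_left (c d x : Fin n → ℝ) : dot (c + d) x = dot c x + dot d x := by
  simp [dot, add_mul, Finset.sum_add_distrib]

lemma dot_smul_left (t : ℝ) (c x : Fin n → ℝ) : dot (t • c) x = t * dot c x := by
  simp [dot, Finset.mul_sum, mul_assoc]

lemma dot_sub_right (c x y : Fin n → ℝ) : dot c (x - y) = dot c x - dot c y := by
  simp [dot, mul_sub, Finset.sum_sub_distrib]

lemma dot_isLinearMap (c : Fin n → ℝ) : IsLinearMap ℝ (dot c) := by
  constructor
  · intro x y; simp [dot, mul_add, Finset.sum_add_distrib]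
  · intro t x; simp [dot, Finset.mul_sum, mul_left_comm]

lemma dot_self_pos {w : Fin n → ℝ} (hw : w ≠ 0) : 0 < dot w w := by
  have hex : ∃ i, w i ≠ 0 := by
    by_contra hc; push_neg at hc; exact hw (funext hc)
  obtain ⟨i, hi⟩ := hex
  exact Finset.sum_pos' (fun j _ => mul_self_nonneg _)
    ⟨i, Finset.mem_univ i, mul_self_pos.2 hi⟩

noncomputable def amax (S : Finset (Fin n → ℝ)) (c : Fin n → ℝ) : Finset (Fin n → ℝ) :=
  S.filter (fun x => ∀ y ∈ S, dot c y ≤ dot c x)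

lemma mem_amax {S : Finset (Fin n → ℝ)} {c x} :
    x ∈ amax S c ↔ x ∈ S ∧ ∀ y ∈ S, dot c y ≤ dot c x := by
  simp [amax, Finset.mem_filter]

lemma amax_subset (S : Finset (Fin n → ℝ)) (c : Fin n → ℝ) : amax S c ⊆ S :=
  Finset.filter_subset _ _

lemma amax_nonempty {S : Finset (Fin n → ℝ)} (hS : S.Nonempty) (c : Fin n → ℝ) :
    (amax S c).Nonempty := by
  obtain ⟨b, hb, hmax⟩ := S.exists_max_image (dot c) hS
  exact ⟨b, mem_amax.2 ⟨hb, hmax⟩⟩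

lemma dot_eq_of_mem_amax {S : Finset (Fin n → ℝ)} {c x y}
    (hx : x ∈ amax S c) (hy : y ∈ amax S c) : dot c x = dot c y :=
  le_antisymm ((mem_amax.1 hy).2 x (amax_subset S c hx))
    ((mem_amax.1 hx).2 y (amax_subset S c hy))

lemma vectorSpan_convexHull (s : Set (Fin n → ℝ)) :
    vectorSpan ℝ (convexHull ℝ s) = vectorSpan ℝ s := by
  rw [← direction_affineSpan, affineSpan_convexHull, direction_affineSpan]

/-- L1: the optimal face of a polytope is the hull of the optimal vertices. -/
lemma optFace_convexHull (S : Finset (Fin n → ℝ)) (hS : S.Nonempty) (c : Fin n → ℝ) :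
    optFace (convexHull ℝ ↑S) c = convexHull ℝ ↑(amax S c) := by
  obtain ⟨m, hm⟩ := amax_nonempty hS c
  have hmS : m ∈ S := amax_subset S c hm
  set M := dot c m with hMdef
  have hSle : ∀ y ∈ S, dot c y ≤ M := (mem_amax.1 hm).2
  have hhull_le : ∀ x ∈ convexHull ℝ (↑S : Set (Fin n → ℝ)), dot c x ≤ M := by
    intro x hx
    exact convexHull_min hSle (convex_halfSpace_le (dot_isLinearMap c) M) hx
  have hmemM : ∀ y ∈ S, dot c y = M → y ∈ amax S c := by
    intro y hy hyM
    exact mem_amax.2 ⟨hy, fun z hz => hyM ▸ hSle z hz⟩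
  apply Set.Subset.antisymm
  · rintro x ⟨hxP, hxmax⟩
    have hxmax' : ∀ y ∈ convexHull ℝ (↑S : Set (Fin n → ℝ)), dot c y ≤ dot c x := hxmax
    have hxM : dot c x = M :=
      le_antisymm (hhull_le x hxP) (hxmax' m (subset_convexHull ℝ _ hmS))
    rw [Finset.convexHull_eq] at hxP
    obtain ⟨w, hw0, hw1, hwx⟩ := hxP
    have hdotsum : dot c x = ∑ y ∈ S, w y * dot c y := by
      rw [← hwx, Finset.centerMass_eq_of_sum_1 _ _ hw1]
      rw [show dot c (∑ y ∈ S, w y • id y) = _ from map_sum ((dot_isLinearMap c).mk' ) _ _]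
      refine Finset.sum_congr rfl fun y _ => ?_
      simp [IsLinearMap.mk'_apply, (dot_isLinearMap c).map_smul, smul_eq_mul]
    have hzero : ∑ y ∈ S, w y * (M - dot c y) = 0 := by
      have : ∑ y ∈ S, w y * (M - dot c y) = (∑ y ∈ S, w y) * M - ∑ y ∈ S, w y * dot c y := by
        rw [Finset.sum_mul]
        rw [← Finset.sum_sub_distrib]
        refine Finset.sum_congr rfl fun y _ => by ring
      rw [this, hw1, ← hdotsum, hxM]; ring
    have hall : ∀ y ∈ S, w y * (M - dot c y) = 0 :=
      (Finset.sum_eq_zero_iff_of_nonneg fun y hy =>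
        mul_nonneg (hw0 y hy) (sub_nonneg.2 (hSle y hy))).1 hzero
    have hsupp : ∀ y ∈ S, w y ≠ 0 → y ∈ amax S c := by
      intro y hy hwy
      have := hall y hy
      rcases mul_eq_zero.1 this with h | h
      · exact absurd h hwy
      · exact hmemM y hy (by linarith [sub_eq_zero.1 h])
    have hxcm : ({y ∈ S | w y ≠ 0} : Finset _).centerMass w id = x := by
      rw [Finset.centerMass_filter_ne_zero]; exact hwx
    rw [← hxcm]
    apply Finset.centerMass_mem_convexHull
    · intro i hi; exact hw0 i (Finset.mem_filter.1 hi).1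
    · have : ∑ i ∈ ({y ∈ S | w y ≠ 0} : Finset _), w i = 1 := by
        rw [Finset.sum_filter_ne_zero]; exact hw1
      rw [this]; exact zero_lt_one
    · intro i hi
      obtain ⟨hiS, hiw⟩ := Finset.mem_filter.1 hi
      exact Finset.mem_coe.2 (hsupp i hiS hiw)
  · intro x hx
    have hsub : (↑(amax S c) : Set (Fin n → ℝ)) ⊆ ↑S := amax_subset S c
    have hxS : x ∈ convexHull ℝ (↑S : Set (Fin n → ℝ)) := convexHull_mono hsub hx
    have hxge : M ≤ dot c x := by
      refine convexHull_min ?_ (convex_halfSpace_ge (dot_isLinearMap c) M) hx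
      intro y hy
      have : dot c y = M := dot_eq_of_mem_amax (Finset.mem_coe.1 hy) hm
      simp [Set.mem_setOf_eq, this]
    exact ⟨hxS, fun y hy => le_trans (hhull_le y hy) hxge⟩

/-- Escaping finitely many hyperplanes. -/
lemma exists_dot_ne (L : Finset (Fin n → ℝ)) (hL : (0 : Fin n → ℝ) ∉ L) :
    ∃ d, ∀ w ∈ L, dot d w ≠ 0 := by
  classical
  induction L using Finset.induction_on with
  | empty => exact ⟨0, by simp⟩
  | @insert w L hwL ih =>
    have hw0 : w ≠ 0 := fun h => hL (h ▸ Finset.mem_insert_self w L)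
    obtain ⟨d, hd⟩ := ih (fun h => hL (Finset.mem_insert_of_mem h))
    set bad : Set ℝ := ⋃ v ∈ ((insert w L : Finset (Fin n → ℝ)) : Set (Fin n → ℝ)),
      {ε : ℝ | dot d v + ε * dot w v = 0} with hbad
    have hfin : bad.Finite := by
      apply Set.Finite.biUnion (Finset.finite_toSet _)
      intro v hv
      by_cases hvw : dot w v = 0
      · have hdv : dot d v ≠ 0 := by
          rcases Finset.mem_insert.1 (Finset.mem_coe.1 hv) with rfl | hvL
          · exact absurd hvw (ne_of_gt (dot_self_pos hw0))
          · exact hd v hvL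
        convert Set.finite_empty
        ext ε; simp [hvw, hdv]
      · apply Set.Finite.subset (Set.finite_singleton (-(dot d v) / dot w v))
        intro ε hε
        simp only [Set.mem_setOf_eq] at hε
        simp only [Set.mem_singleton_iff]
        field_simp
        linarith
    obtain ⟨ε, hε⟩ := hfin.infinite_compl.nonempty
    refine ⟨d + ε • w, fun v hv h0 => hε ?_⟩
    have heq : dot (d + ε • w) v = dot d v + ε * dot w v := by
      rw [dot_add_left, dot_smul_left]
    exact Set.mem_biUnion (Finset.mem_coe.2 hv) (by rw [Set.mem_setOf_eq, ← heq]; exact h0)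

lemma eq_zero_of_forall_mul_le {r C : ℝ} (h : ∀ t : ℝ, t * r ≤ C) : r = 0 := by
  by_contra hr
  have := h ((C + 1) / r)
  rw [div_mul_cancel₀ _ hr] at this
  linarith

/-- duality: if `v` is orthogonal to everything orthogonal to `vectorSpan s`, it's in it. -/
lemma mem_vectorSpan_of_dot (s : Set (Fin n → ℝ)) (v : Fin n → ℝ)
    (h : ∀ u, (∀ w ∈ vectorSpan ℝ s, dot u w = 0) → dot u v = 0) :
    v ∈ vectorSpan ℝ s := by
  by_contra hv
  set U := vectorSpan ℝ s with hU
  have hq : (U.mkQ v) ≠ 0 := by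
    simpa [Submodule.mkQ_apply, Submodule.Quotient.mk_eq_zero] using hv
  obtain ⟨ψ, hψ⟩ : ∃ ψ : Module.Dual ℝ ((Fin n → ℝ) ⧸ U), ψ (U.mkQ v) ≠ 0 := by
    by_contra hc; push_neg at hc
    exact hq ((Module.forall_dual_apply_eq_zero_iff ℝ _).1 hc)
  set φ : (Fin n → ℝ) →ₗ[ℝ] ℝ := ψ.comp U.mkQ with hφ
  set u : Fin n → ℝ := fun i => φ (fun j => if i = j then 1 else 0) with hu
  have hrep : ∀ x : Fin n → ℝ, dot u x = φ x := by
    intro x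
    conv_rhs => rw [pi_eq_sum_univ x]
    rw [map_sum, dot]
    refine Finset.sum_congr rfl fun i _ => ?_
    rw [map_smul]
    simp [u, smul_eq_mul, mul_comm]
  have hu0 : ∀ w ∈ U, dot u w = 0 := by
    intro w hw
    rw [hrep]
    simp [hφ, Submodule.mkQ_apply, (Submodule.Quotient.mk_eq_zero U).2 hw]
  have hv0 := h u hu0
  rw [hrep] at hv0
  simp only [hφ, LinearMap.comp_apply] at hv0
  exact hψ hv0

/-- stability of a strict maximizer under small perturbations. -/
lemma amax_stable (A : Finset (Fin n → ℝ)) {e a : Fin n → ℝ} (u : Fin n → ℝ)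
    (ha : amax A e = {a}) :
    ∃ ε > 0, ∀ t : ℝ, |t| < ε → a ∈ amax A (e + t • u) := by
  have haA : a ∈ A := amax_subset A e (ha ▸ Finset.mem_singleton_self a)
  have hamax : ∀ y ∈ A, dot e y ≤ dot e a :=
    (mem_amax.1 (ha ▸ Finset.mem_singleton_self a)).2
  have hstrict : ∀ x ∈ A, x ≠ a → dot e x < dot e a := by
    intro x hx hxa
    rcases lt_or_eq_of_le (hamax x hx) with h | h
    · exact h
    · exfalso; apply hxa
      have : x ∈ amax A e := mem_amax.2 ⟨hx, fun y hy => h.symm ▸ hamax y hy⟩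
      rw [ha] at this; exact Finset.mem_singleton.1 this
  by_cases hAe : A.erase a = ∅
  · refine ⟨1, one_pos, fun t _ => mem_amax.2 ⟨haA, fun y hy => ?_⟩⟩
    have : y = a := by
      by_contra hya
      exact absurd (hAe ▸ Finset.mem_erase.2 ⟨hya, hy⟩) (Finset.notMem_empty y)
    rw [this]
  · have hAne : (A.erase a).Nonempty := Finset.nonempty_iff_ne_empty.2 hAe
    have hδex : ∃ δ : ℝ, 0 < δ ∧ ∀ x ∈ A, x ≠ a → dot e x ≤ dot e a - δ := by
      have hFne : ((A.erase a).image (fun x => dot e a - dot e x)).Nonempty :=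
        Finset.Nonempty.image hAne _
      refine ⟨((A.erase a).image (fun x => dot e a - dot e x)).min' hFne, ?_, ?_⟩
      · obtain ⟨x, hx, hval⟩ := Finset.mem_image.1 (Finset.min'_mem _ hFne)
        have hxA : x ∈ A := (Finset.mem_erase.1 hx).2
        have hxa : x ≠ a := (Finset.mem_erase.1 hx).1
        rw [← hval]
        linarith [hstrict x hxA hxa]
      · intro x hx hxa
        have hmem : dot e a - dot e x ∈ (A.erase a).image (fun x => dot e a - dot e x) :=
          Finset.mem_image_of_mem _ (Finset.mem_erase.2 ⟨hxa, hx⟩)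
        linarith [Finset.min'_le _ _ hmem]
    obtain ⟨δ, hδpos, hδb⟩ := hδex
    have hCex : ∃ C : ℝ, 0 ≤ C ∧ ∀ x ∈ A, |dot u x| ≤ C := by
      refine ⟨(A.image fun x => |dot u x|).max' (Finset.Nonempty.image ⟨a, haA⟩ _), ?_, ?_⟩
      · exact le_trans (abs_nonneg _)
          (Finset.le_max' (A.image fun x => |dot u x|) _
            (Finset.mem_image_of_mem (fun x => |dot u x|) haA))
      · intro x hx
        exact Finset.le_max' (A.image fun x => |dot u x|) _
          (Finset.mem_image_of_mem (fun x => |dot u x|) hx)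
    obtain ⟨C, hC0, hCb⟩ := hCex
    refine ⟨δ / (2 * (C + 1)), by positivity, fun t ht => mem_amax.2 ⟨haA, fun y hy => ?_⟩⟩
    rcases eq_or_ne y a with rfl | hya
    · exact le_refl _
    · have h1 : dot e y ≤ dot e a - δ := hδb y hy hya
      have hty : |t * dot u y| ≤ (δ / (2 * (C + 1))) * C := by
        rw [abs_mul]
        exact mul_le_mul ht.le (hCb y hy) (abs_nonneg _) (by positivity)
      have hta : |t * dot u a| ≤ (δ / (2 * (C + 1))) * C := by
        rw [abs_mul]
        exact mul_le_mul ht.le (hCb a haA) (abs_nonneg _) (by positivity)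
      have hεC : (δ / (2 * (C + 1))) * C ≤ δ / 2 := by
        rw [div_mul_eq_mul_div, div_le_div_iff₀ (by positivity) (by positivity)]
        nlinarith
      have e1 : dot (e + t • u) y = dot e y + t * dot u y := by
        rw [dot_add_left, dot_smul_left]
      have e2 : dot (e + t • u) a = dot e a + t * dot u a := by
        rw [dot_add_left, dot_smul_left]
      rw [e1, e2]
      have b1 : t * dot u y ≤ δ / 2 := le_trans (le_abs_self _) (le_trans hty hεC)
      have b2 : -(δ / 2) ≤ t * dot u a :=
        le_trans (neg_le_neg (le_trans hta hεC)) (neg_abs_le _)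
      linarith

/-- Core lemma. -/
lemma core (A B : Finset (Fin n → ℝ)) (hA : A.Nonempty) (hB : B.Nonempty)
    (h : ∀ d : Fin n → ℝ, (∃ b, amax B d = {b}) → ∃ a, amax A d = {a}) :
    vectorSpan ℝ (A : Set (Fin n → ℝ)) ≤ vectorSpan ℝ (B : Set (Fin n → ℝ)) := by
  classical
  set L := ((B ×ˢ B).image fun p => p.1 - p.2).erase 0 with hL
  obtain ⟨d₀, hd₀⟩ := exists_dot_ne L (Finset.notMem_erase _ _)
  have hd₀' : ∀ b ∈ B, ∀ b' ∈ B, b ≠ b' → dot d₀ (b - b') ≠ 0 := by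
    intro b hb b' hb' hne
    apply hd₀
    refine Finset.mem_erase.2 ⟨sub_ne_zero.2 hne, ?_⟩
    exact Finset.mem_image.2 ⟨(b, b'), Finset.mem_product.2 ⟨hb, hb'⟩, rfl⟩
  rw [vectorSpan_def, Submodule.span_le]
  rintro w ⟨a, ha, a', ha', rfl⟩
  rw [SetLike.mem_coe]
  apply mem_vectorSpan_of_dot
  intro u hu
  -- the B-side argmax is a singleton along the whole line d₀ + t • u
  have bsing : ∀ t : ℝ, ∃ b, amax B (d₀ + t • u) = {b} := by
    intro t
    obtain ⟨b, hb⟩ := amax_nonempty hB (d₀ + t • u)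
    refine ⟨b, Finset.eq_singleton_iff_unique_mem.2 ⟨hb, fun x hx => ?_⟩⟩
    by_contra hne
    have hxb : dot (d₀ + t • u) (x - b) = 0 := by
      rw [dot_sub_right, dot_eq_of_mem_amax hx hb, sub_self]
    have hub : dot u (x - b) = 0 := by
      apply hu
      rw [show x - b = x -ᵥ b from rfl]
      exact vsub_mem_vectorSpan ℝ (Finset.mem_coe.2 (amax_subset B _ hx))
        (Finset.mem_coe.2 (amax_subset B _ hb))
    rw [dot_add_left, dot_smul_left, hub, mul_zero, add_zero] at hxb
    exact hd₀' x (amax_subset B _ hx) b (amax_subset B _ hb) hne hxb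
  choose g hg using fun t => h _ (bsing t)
  have hloc : ∀ t : ℝ, ∃ ε > 0, ∀ s : ℝ, |s - t| < ε → g s = g t := by
    intro t
    obtain ⟨ε, hε, hst⟩ := amax_stable A u (hg t)
    refine ⟨ε, hε, fun s hs => ?_⟩
    have hmem := hst (s - t) hs
    have heq : (d₀ + t • u) + (s - t) • u = d₀ + s • u := by
      rw [sub_smul]; abel
    rw [heq, hg s] at hmem
    exact (Finset.mem_singleton.1 hmem).symm
  have hconst : ∀ t : ℝ, g t = g 0 := by
    have hcl : IsClopen {s : ℝ | g s = g 0} := by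
      constructor
      · rw [← isOpen_compl_iff, Metric.isOpen_iff]
        intro t ht
        obtain ⟨ε, hε, hl⟩ := hloc t
        refine ⟨ε, hε, fun s hs => ?_⟩
        have := hl s (by have hs' := Metric.mem_ball.1 hs; rwa [Real.dist_eq] at hs')
        simp only [Set.mem_compl_iff, Set.mem_setOf_eq] at ht ⊢
        rw [this]; exact ht
      · rw [Metric.isOpen_iff]
        intro t ht
        obtain ⟨ε, hε, hl⟩ := hloc t
        refine ⟨ε, hε, fun s hs => ?_⟩
        have := hl s (by have hs' := Metric.mem_ball.1 hs; rwa [Real.dist_eq] at hs')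
        simp only [Set.mem_setOf_eq] at ht ⊢
        rw [this]; exact ht
    rcases isClopen_iff.1 hcl with hemp | huniv
    · exfalso
      have : (0 : ℝ) ∈ {s : ℝ | g s = g 0} := rfl
      rw [hemp] at this
      exact this
    · intro t
      have : t ∈ {s : ℝ | g s = g 0} := by rw [huniv]; trivial
      exact this
  have hAall : ∀ x ∈ A, dot u x = dot u (g 0) := by
    intro x hx
    have hkey : ∀ t : ℝ, t * (dot u x - dot u (g 0)) ≤ dot d₀ (g 0) - dot d₀ x := by
      intro t
      have hmem : g 0 ∈ amax A (d₀ + t • u) := by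
        rw [hg t, hconst t]; exact Finset.mem_singleton_self _
      have := (mem_amax.1 hmem).2 x hx
      rw [dot_add_left, dot_smul_left, dot_add_left, dot_smul_left] at this
      nlinarith [this]
    have := eq_zero_of_forall_mul_le hkey
    linarith [sub_eq_zero.1 this]
  show dot u (a - a') = 0
  rw [dot_sub_right, hAall a (Finset.mem_coe.1 ha), hAall a' (Finset.mem_coe.1 ha')]
  ring

/-- L2: lexicographic perturbation. -/
lemma amax_shift (S : Finset (Fin n → ℝ)) (hS : S.Nonempty) (c d : Fin n → ℝ) :
    ∃ N₀ : ℝ, 0 < N₀ ∧ ∀ N : ℝ, N₀ ≤ N → amax S (N • c + d) = amax (amax S c) d := by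
  obtain ⟨m, hm⟩ := amax_nonempty hS c
  have hmS : m ∈ S := amax_subset S c hm
  set M := dot c m with hMdef
  have hSle : ∀ y ∈ S, dot c y ≤ M := (mem_amax.1 hm).2
  have hTM : ∀ x ∈ amax S c, dot c x = M := fun x hx => dot_eq_of_mem_amax hx hm
  have hδ : ∃ δ : ℝ, 0 < δ ∧ ∀ y ∈ S, y ∉ amax S c → dot c y ≤ M - δ := by
    by_cases hST : (S \ amax S c) = ∅
    · exact ⟨1, one_pos, fun y hy hy' =>
        absurd (Finset.mem_sdiff.2 ⟨hy, hy'⟩) (by simp [hST])⟩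
    · have hne : (S \ amax S c).Nonempty := Finset.nonempty_iff_ne_empty.2 hST
      have hFne : ((S \ amax S c).image (fun y => M - dot c y)).Nonempty :=
        Finset.Nonempty.image hne _
      refine ⟨((S \ amax S c).image (fun y => M - dot c y)).min' hFne, ?_, ?_⟩
      · obtain ⟨y, hy, hval⟩ := Finset.mem_image.1 (Finset.min'_mem _ hFne)
        have hyS : y ∈ S := (Finset.mem_sdiff.1 hy).1
        have hyT : y ∉ amax S c := (Finset.mem_sdiff.1 hy).2
        have hlt : dot c y < M := by
          rcases lt_or_eq_of_le (hSle y hyS) with h | h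
          · exact h
          · exact absurd (mem_amax.2 ⟨hyS, fun z hz => h ▸ hSle z hz⟩) hyT
        rw [← hval]; linarith
      · intro y hyS hyT
        have hmem : M - dot c y ∈ (S \ amax S c).image (fun y => M - dot c y) :=
          Finset.mem_image_of_mem _ (Finset.mem_sdiff.2 ⟨hyS, hyT⟩)
        linarith [Finset.min'_le _ _ hmem]
  obtain ⟨δ, hδpos, hgap⟩ := hδ
  have hDex : ∃ D : ℝ, 0 ≤ D ∧ ∀ x ∈ S, |dot d x| ≤ D := by
    refine ⟨(S.image fun x => |dot d x|).max' (Finset.Nonempty.image hS _), ?_, ?_⟩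
    · exact le_trans (abs_nonneg _)
        (Finset.le_max' (S.image fun x => |dot d x|) _
          (Finset.mem_image_of_mem (fun x => |dot d x|) hmS))
    · intro x hx
      exact Finset.le_max' (S.image fun x => |dot d x|) _
        (Finset.mem_image_of_mem (fun x => |dot d x|) hx)
  obtain ⟨D, hD0, hDb⟩ := hDex
  refine ⟨(2 * D + 1) / δ, by positivity, fun N hN => ?_⟩
  have hNpos : 0 < N := lt_of_lt_of_le (by positivity) hN
  have hNδ : 2 * D + 1 ≤ N * δ := by
    rw [div_le_iff₀ hδpos] at hN; linarith
  ext x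
  rw [mem_amax, mem_amax]
  constructor
  · rintro ⟨hxS, hxmax⟩
    have hcomb : ∀ y ∈ S, N * dot c y + dot d y ≤ N * dot c x + dot d x := by
      intro y hy
      have := hxmax y hy
      rwa [dot_add_left, dot_smul_left, dot_add_left, dot_smul_left] at this
    have hxT : x ∈ amax S c := by
      by_contra hxT
      have h1 : dot c x ≤ M - δ := hgap x hxS hxT
      have h2 := hcomb m hmS
      have h3 : N * dot c x ≤ N * (M - δ) := by
        exact mul_le_mul_of_nonneg_left h1 hNpos.le
      have h4 : dot d x ≤ D := le_trans (le_abs_self _) (hDb x hxS)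
      have h5 : -D ≤ dot d m := le_trans (neg_le_neg (hDb m hmS)) (neg_abs_le _)
      rw [← hMdef] at h2
      nlinarith
    refine ⟨hxT, fun y hy => ?_⟩
    have h3 := hcomb y (amax_subset S c hy)
    rw [hTM y hy, hTM x hxT] at h3
    linarith
  · rintro ⟨hxT, hxmax⟩
    have hxS : x ∈ S := amax_subset S c hxT
    have hxM : dot c x = M := hTM x hxT
    refine ⟨hxS, fun y hy => ?_⟩
    rw [dot_add_left, dot_smul_left, dot_add_left, dot_smul_left]
    by_cases hyT : y ∈ amax S c
    · have := hxmax y hyT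
      rw [hTM y hyT, hxM]
      linarith
    · have h1 : dot c y ≤ M - δ := hgap y hy hyT
      have h2 : dot d y ≤ D := le_trans (le_abs_self _) (hDb y hy)
      have h3 : -D ≤ dot d x := le_trans (neg_le_neg (hDb x hxS)) (neg_abs_le _)
      have h4 : N * dot c y ≤ N * (M - δ) := mul_le_mul_of_nonneg_left h1 hNpos.le
      rw [hxM]
      nlinarith

end Stmt1Aux

open Stmt1Aux in
theorem stmt1 {n : ℕ} (SP SQ : Finset (Fin n → ℝ)) (hSP : SP.Nonempty) (hSQ : SQ.Nonempty)
    (P Q : Set (Fin n → ℝ)) (hP : P = convexHull ℝ ↑SP) (hQ : Q = convexHull ℝ ↑SQ)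
    (c : Fin n → ℝ) (h : dimSet (optFace Q c) < dimSet (optFace P c)) :
    ∃ c' : Fin n → ℝ, (∃ x, optFace Q c' = {x}) ∧ ¬ (∃ x, optFace P c' = {x}) := by
  classical
  set A := amax SP c with hA
  set B := amax SQ c with hB
  have hAne : A.Nonempty := amax_nonempty hSP c
  have hBne : B.Nonempty := amax_nonempty hSQ c
  have hdimP : dimSet (optFace P c) = Module.finrank ℝ ↥(vectorSpan ℝ (A : Set (Fin n → ℝ))) := by
    rw [hP, optFace_convexHull SP hSP c, dimSet, vectorSpan_convexHull]
  have hdimQ : dimSet (optFace Q c) = Module.finrank ℝ ↥(vectorSpan ℝ (B : Set (Fin n → ℝ))) := by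
    rw [hQ, optFace_convexHull SQ hSQ c, dimSet, vectorSpan_convexHull]
  rw [hdimP, hdimQ] at h
  have hnle : ¬ vectorSpan ℝ (A : Set (Fin n → ℝ)) ≤ vectorSpan ℝ (B : Set (Fin n → ℝ)) := by
    intro hle
    exact absurd (Submodule.finrank_mono hle) (not_le.2 h)
  have hd : ∃ d, (∃ b, amax B d = {b}) ∧ ¬ (∃ a, amax A d = {a}) := by
    by_contra hcon
    push_neg at hcon
    exact hnle (core A B hAne hBne fun d hb => by
      rcases hb with ⟨b, hb⟩
      exact hcon d ⟨b, hb⟩)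
  obtain ⟨d, ⟨b, hbd⟩, hnA⟩ := hd
  obtain ⟨N₁, hN₁pos, hN₁⟩ := amax_shift SP hSP c d
  obtain ⟨N₂, hN₂pos, hN₂⟩ := amax_shift SQ hSQ c d
  set N := max N₁ N₂ with hN
  refine ⟨N • c + d, ⟨b, ?_⟩, ?_⟩
  · rw [hQ, optFace_convexHull SQ hSQ, hN₂ N (le_max_right _ _), ← hB, hbd]
    simp
  · rintro ⟨x, hx⟩
    apply hnA
    rw [hP, optFace_convexHull SP hSP, hN₁ N (le_max_left _ _), ← hA] at hx
    have hne : (amax A d).Nonempty := amax_nonempty hAne d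
    have hsub : (↑(amax A d) : Set (Fin n → ℝ)) ⊆ {x} := hx ▸ subset_convexHull ℝ _
    refine ⟨x, Finset.eq_singleton_iff_unique_mem.2 ⟨?_, ?_⟩⟩
    · obtain ⟨y, hy⟩ := hne
      have : y = x := hsub (Finset.mem_coe.2 hy)
      rwa [← this]
    · intro z hz
      exact hsub (Finset.mem_coe.2 hz)
end

section
/- Let P ⊆ R^n be a non-empty polytope, let c, a ∈ R^n, and let ℓ = min{<a,x> : x ∈ P}. Define h=(β) = max{<c,x> : x ∈ P, <a,x> = β} and h≤(β) = max{<c,x> : x ∈ P, <a,x> ≤ β} for β ≥ ℓ. Then there exists β* ∈ [ℓ, ∞) such that h= and h≤ agree and are strictly monotonically increasing on [ℓ, β*], and h≤ is constant on [β*, ∞). -/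
theorem stmt3 {n : ℕ} (S : Finset (Fin n → ℝ)) (hS : S.Nonempty)
    (P : Set (Fin n → ℝ)) (hP : P = convexHull ℝ ↑S) (c a : Fin n → ℝ)
    (ℓ u : ℝ) (hℓ : IsLeast {r | ∃ x ∈ P, ∑ i, a i * x i = r} ℓ)
    (hu : IsGreatest {r | ∃ x ∈ P, ∑ i, a i * x i = r} u)
    (heq hle : ℝ → ℝ)
    (hheq : ∀ β ∈ Set.Icc ℓ u,
      IsGreatest {r | ∃ x ∈ P, (∑ i, a i * x i) = β ∧ (∑ i, c i * x i) = r} (heq β))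
    (hhle : ∀ β, ℓ ≤ β →
      IsGreatest {r | ∃ x ∈ P, (∑ i, a i * x i) ≤ β ∧ (∑ i, c i * x i) = r} (hle β)) :
    ∃ βstar : ℝ, ℓ ≤ βstar ∧ βstar ≤ u ∧
      (∀ β ∈ Set.Icc ℓ βstar, heq β = hle β) ∧
      StrictMonoOn hle (Set.Icc ℓ βstar) ∧
      StrictMonoOn heq (Set.Icc ℓ βstar) ∧
      (∀ β, βstar ≤ β → hle β = hle βstar) := by
  have hPc : IsCompact P := hP ▸ (S.finite_toSet.isCompact_convexHull (𝕜 := ℝ))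
  have hPconv : Convex ℝ P := hP ▸ convex_convexHull ℝ _
  have hℓle : ∀ x ∈ P, ℓ ≤ ∑ i, a i * x i := fun x hx => hℓ.2 ⟨x, hx, rfl⟩
  have hule : ∀ x ∈ P, ∑ i, a i * x i ≤ u := fun x hx => hu.2 ⟨x, hx, rfl⟩
  have hℓu : ℓ ≤ u := by
    obtain ⟨x, hx, hxe⟩ := hℓ.1
    exact hxe ▸ hℓle x hx |>.trans (hxe ▸ hule x hx)
  set M := hle u with hM
  have mono : ∀ β1 β2, ℓ ≤ β1 → β1 ≤ β2 → hle β1 ≤ hle β2 := by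
    intro β1 β2 h1 h12
    obtain ⟨x, hx, hax, hcx⟩ := (hhle β1 h1).1
    exact (hhle β2 (h1.trans h12)).2 ⟨x, hx, hax.trans h12, hcx⟩
  have hleM : ∀ β, ℓ ≤ β → hle β ≤ M := by
    intro β hβ
    obtain ⟨x, hx, _, hcx⟩ := (hhle β hβ).1
    exact (hhle u hℓu).2 ⟨x, hx, hule x hx, hcx⟩
  have hacont : Continuous fun x : Fin n → ℝ => ∑ i, a i * x i := by
    exact continuous_finset_sum _ fun i _ => continuous_const.mul (continuous_apply i)
  have hccont : Continuous fun x : Fin n → ℝ => ∑ i, c i * x i := by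
    exact continuous_finset_sum _ fun i _ => continuous_const.mul (continuous_apply i)
  obtain ⟨xM, hxM, _, hcxM⟩ := (hhle u hℓu).1
  have hKc : IsCompact {x ∈ P | ∑ i, c i * x i = M} :=
    hPc.inter_right (isClosed_eq hccont continuous_const)
  have hKne : {x ∈ P | ∑ i, c i * x i = M}.Nonempty := ⟨xM, hxM, hcxM⟩
  obtain ⟨x₀, hx₀, hmin⟩ := hKc.exists_isMinOn hKne hacont.continuousOn
  set βs := ∑ i, a i * x₀ i with hβs
  have hx₀P : x₀ ∈ P := hx₀.1
  have hcx₀ : ∑ i, c i * x₀ i = M := hx₀.2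
  have hℓβs : ℓ ≤ βs := hℓle x₀ hx₀P
  have hβsu : βs ≤ u := hule x₀ hx₀P
  have hβsM : hle βs = M :=
    le_antisymm (hleM βs hℓβs) ((hhle βs hℓβs).2 ⟨x₀, hx₀P, le_refl _, hcx₀⟩)
  -- if hle β = M then βs ≤ β
  have keyM : ∀ β, ℓ ≤ β → hle β = M → βs ≤ β := by
    intro β hβ hEq
    obtain ⟨x, hx, hax, hcx⟩ := (hhle β hβ).1
    have hxK : x ∈ {x ∈ P | ∑ i, c i * x i = M} := ⟨hx, by rw [hcx, hEq]⟩
    exact le_trans (hmin hxK) hax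
  -- concavity: equal values below u force the max
  have key2 : ∀ β1 β2, ℓ ≤ β1 → β1 < β2 → β2 ≤ u → hle β1 = hle β2 → hle β1 = M := by
    intro β1 β2 h1 h12 h2u hEq
    rcases eq_or_lt_of_le h2u with h | h
    · rw [hEq, h]
    · obtain ⟨x1, hx1, hax1, hcx1⟩ := (hhle β1 h1).1
      set t := (u - β2) / (u - β1) with ht
      have h1u : β1 < u := h12.trans h
      have ht0 : 0 < t := div_pos (by linarith) (by linarith)
      have ht1 : t < 1 := (div_lt_one (by linarith)).2 (by linarith)
      set z := t • x1 + (1 - t) • xM with hz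
      have hzP : z ∈ P := hPconv hx1 hxM (le_of_lt ht0) (by linarith) (by ring)
      have expand : ∀ v : Fin n → ℝ,
          ∑ i, v i * z i = t * ∑ i, v i * x1 i + (1 - t) * ∑ i, v i * xM i := by
        intro v
        simp only [hz, Pi.add_apply, Pi.smul_apply, smul_eq_mul, Finset.mul_sum,
          ← Finset.sum_add_distrib]
        exact Finset.sum_congr rfl fun i _ => by ring
      have haz : ∑ i, a i * z i ≤ β2 := by
        rw [expand a]
        have hu2 : ∑ i, a i * xM i ≤ u := hule xM hxM
        have hne : u - β1 ≠ 0 := by linarith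
        have httu : t * β1 + (1 - t) * u = β2 := by
          rw [ht]
          field_simp
          ring
        nlinarith
      have hcz : ∑ i, c i * z i = t * hle β1 + (1 - t) * M := by
        rw [expand c, hcx1, hcxM]
      have hle2 : t * hle β1 + (1 - t) * M ≤ hle β2 :=
        (hhle β2 (h1.trans h12.le)).2 ⟨z, hzP, haz, hcz⟩
      have hMle : M ≤ hle β1 := by nlinarith [hEq]
      exact le_antisymm (hleM β1 h1) hMle
  -- heq = hle on [ℓ, βs]
  have heqhle : ∀ β ∈ Set.Icc ℓ βs, heq β = hle β := by
    rintro β ⟨hβℓ, hββs⟩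
    have hβu : β ≤ u := hββs.trans hβsu
    have h1 : heq β ≤ hle β := by
      obtain ⟨x, hx, hax, hcx⟩ := (hheq β ⟨hβℓ, hβu⟩).1
      exact (hhle β hβℓ).2 ⟨x, hx, le_of_eq hax, hcx⟩
    have h2 : hle β ≤ heq β := by
      obtain ⟨x, hx, hax, hcx⟩ := (hhle β hβℓ).1
      rcases eq_or_lt_of_le hax with h | h
      · exact (hheq β ⟨hβℓ, hβu⟩).2 ⟨x, hx, h, hcx⟩
      · exfalso
        set γ := ∑ i, a i * x i with hγ
        have hℓγ : ℓ ≤ γ := hℓle x hx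
        have hγβ : hle γ = hle β :=
          le_antisymm (mono γ β hℓγ h.le) ((hhle γ hℓγ).2 ⟨x, hx, le_refl _, hcx⟩)
        have hγM : hle γ = M := key2 γ β hℓγ h hβu hγβ
        have : βs ≤ γ := keyM γ hℓγ hγM
        linarith [hββs]
    exact le_antisymm h1 h2
  have hsm : StrictMonoOn hle (Set.Icc ℓ βs) := by
    rintro β1 ⟨h1ℓ, h1s⟩ β2 ⟨h2ℓ, h2s⟩ h12
    refine lt_of_le_of_ne (mono β1 β2 h1ℓ h12.le) fun hEq => ?_
    have hβ1M : hle β1 = M := key2 β1 β2 h1ℓ h12 (h2s.trans hβsu) hEq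
    have : βs ≤ β1 := keyM β1 h1ℓ hβ1M
    linarith
  refine ⟨βs, hℓβs, hβsu, heqhle, hsm, ?_, ?_⟩
  · intro β1 h1 β2 h2 h12
    rw [heqhle β1 h1, heqhle β2 h2]
    exact hsm h1 h2 h12
  · intro β hβ
    have hℓβ : ℓ ≤ β := hℓβs.trans hβ
    refine le_antisymm ((hleM β hℓβ).trans_eq hβsM.symm) (mono βs β hℓβs hβ)
end

section
/- Let G be the 1-sum of graphs G1 and G2 at vertices v1 ∈ V(G1) and v2 ∈ V(G2) (identify v1 with v2). Then the stable set polytope of G equals the 1-sum of the stable set polytopes of G1 and G2 at coordinates v1 and v2; in particular, P_stab(G) is described by the union of inequality descriptions of P_stab(G1) and P_stab(G2) with the variables v1 and v2 identified. -/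
noncomputable def Pstab {V : Type*} [Fintype V] [DecidableEq V] (G : SimpleGraph V) :
    Set (V → ℝ) :=
  convexHull ℝ {x | ∃ S : Finset V, IsStable G S ∧ x = chi S}

/-- The vertex set of the 1-sum of `G1` and `G2` at `v1`, `v2`: the vertex `v2` of `G2`
is identified with the vertex `v1` of `G1` (represented by `Sum.inl v1`). -/
abbrev OneSumVerts (V1 V2 : Type*) (v2 : V2) := V1 ⊕ {v : V2 // v ≠ v2}

/-- The 1-sum of the graphs `G1` and `G2` at the vertices `v1` and `v2`. -/
def oneSumGraph {V1 V2 : Type*} (G1 : SimpleGraph V1) (G2 : SimpleGraph V2)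
    (v1 : V1) (v2 : V2) : SimpleGraph (OneSumVerts V1 V2 v2) :=
  SimpleGraph.fromRel (fun p q =>
    match p, q with
    | Sum.inl u, Sum.inl w => G1.Adj u w
    | Sum.inr u, Sum.inr w => G2.Adj u.1 w.1
    | Sum.inl u, Sum.inr w => u = v1 ∧ G2.Adj v2 w.1
    | Sum.inr u, Sum.inl w => w = v1 ∧ G2.Adj v2 u.1)

section Aux

open Finset

/-- Split a point of a convex hull of a union along a linear functional that is `1` on `S`
and `0` on `T`. -/
lemma decomp_hull {E : Type*} [AddCommGroup E] [Module ℝ E] {S T : Set E}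
    (hS : S.Nonempty) (hT : T.Nonempty) (f : E →ₗ[ℝ] ℝ)
    (hfS : ∀ s ∈ S, f s = 1) (hfT : ∀ t ∈ T, f t = 0)
    {x : E} (hx : x ∈ convexHull ℝ (S ∪ T)) :
    0 ≤ f x ∧ f x ≤ 1 ∧ ∃ p ∈ convexHull ℝ S, ∃ q ∈ convexHull ℝ T,
      x = f x • p + (1 - f x) • q := by
  classical
  rw [_root_.convexHull_eq] at hx
  obtain ⟨ι, t, w, zf, hw0, hw1, hz, rfl⟩ := hx
  set t1 := t.filter (fun i => zf i ∈ S) with ht1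
  set t2 := t.filter (fun i => ¬ zf i ∈ S) with ht2
  have hunion : t1 ∪ t2 = t := Finset.filter_union_filter_not_eq _ t
  have hdisj : Disjoint t1 t2 := Finset.disjoint_filter_filter_not t t _
  have hcm : t.centerMass w zf = ∑ i ∈ t, w i • zf i :=
    Finset.centerMass_eq_of_sum_1 _ _ hw1
  have hzS : ∀ i ∈ t1, zf i ∈ S := fun i hi => (Finset.mem_filter.1 hi).2
  have hzT : ∀ i ∈ t2, zf i ∈ T := by
    intro i hi
    have h := Finset.mem_filter.1 hi
    rcases hz i h.1 with h' | h'
    · exact absurd h' h.2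
    · exact h'
  have hw01 : ∀ i ∈ t1, 0 ≤ w i := fun i hi => hw0 i (Finset.mem_filter.1 hi).1
  have hw02 : ∀ i ∈ t2, 0 ≤ w i := fun i hi => hw0 i (Finset.mem_filter.1 hi).1
  set α := ∑ i ∈ t1, w i with hα
  have hwsplit : α + ∑ i ∈ t2, w i = 1 := by
    rw [hα, ← Finset.sum_union hdisj, hunion]; exact hw1
  have hα0 : 0 ≤ α := Finset.sum_nonneg hw01
  have hβ0 : 0 ≤ ∑ i ∈ t2, w i := Finset.sum_nonneg hw02
  have hα1 : α ≤ 1 := by linarith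
  have hfx : f (t.centerMass w zf) = α := by
    rw [hcm, ← hunion, Finset.sum_union hdisj, map_add, map_sum, map_sum]
    have h1 : ∑ i ∈ t1, f (w i • zf i) = α := by
      rw [hα]
      refine Finset.sum_congr rfl fun i hi => ?_
      rw [map_smul, hfS _ (hzS i hi), smul_eq_mul, mul_one]
    have h2 : ∑ i ∈ t2, f (w i • zf i) = 0 := by
      refine Finset.sum_eq_zero fun i hi => ?_
      rw [map_smul, hfT _ (hzT i hi), smul_eq_mul, mul_zero]
    rw [h1, h2, add_zero]
  have hsplit : t.centerMass w zf = ∑ i ∈ t1, w i • zf i + ∑ i ∈ t2, w i • zf i := by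
    rw [hcm, ← hunion, Finset.sum_union hdisj]
  refine ⟨by rw [hfx]; exact hα0, by rw [hfx]; exact hα1, ?_⟩
  rw [hfx]
  by_cases h0 : α = 0
  · -- all weights on t1 vanish
    have hzero : ∀ i ∈ t1, w i = 0 :=
      (Finset.sum_eq_zero_iff_of_nonneg hw01).1 (by rw [← hα, h0])
    have hsum2 : ∑ i ∈ t2, w i = 1 := by linarith
    refine ⟨hS.some, subset_convexHull ℝ S hS.some_mem, t2.centerMass w zf,
      Finset.centerMass_mem_convexHull t2 hw02 (by rw [hsum2]; norm_num) hzT, ?_⟩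
    have h1z : ∑ i ∈ t1, w i • zf i = 0 :=
      Finset.sum_eq_zero (fun i hi => by rw [hzero i hi, zero_smul])
    rw [h0, zero_smul, zero_add, sub_zero, one_smul, hsplit, h1z, zero_add,
      Finset.centerMass_eq_of_sum_1 _ _ hsum2]
  · by_cases h1 : α = 1
    · have hsum2 : ∑ i ∈ t2, w i = 0 := by linarith
      have hzero : ∀ i ∈ t2, w i = 0 :=
        (Finset.sum_eq_zero_iff_of_nonneg hw02).1 hsum2
      refine ⟨t1.centerMass w zf,
        Finset.centerMass_mem_convexHull t1 hw01 (by rw [← hα, h1]; norm_num) hzS,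
        hT.some, subset_convexHull ℝ T hT.some_mem, ?_⟩
      have h2z : ∑ i ∈ t2, w i • zf i = 0 :=
        Finset.sum_eq_zero (fun i hi => by rw [hzero i hi, zero_smul])
      rw [h1, one_smul, sub_self, zero_smul, add_zero, hsplit, h2z, add_zero,
        Finset.centerMass_eq_of_sum_1 _ _ (by rw [← hα, h1])]
    · have hsum2 : ∑ i ∈ t2, w i = 1 - α := by linarith
      have hsum2ne : ∑ i ∈ t2, w i ≠ 0 := by
        rw [hsum2]; intro h; apply h1; linarith
      refine ⟨t1.centerMass w zf,
        Finset.centerMass_mem_convexHull t1 hw01 (lt_of_le_of_ne hα0 (Ne.symm h0)) hzS,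
        t2.centerMass w zf,
        Finset.centerMass_mem_convexHull t2 hw02
          (lt_of_le_of_ne (by linarith) (Ne.symm hsum2ne)) hzT, ?_⟩
      rw [hsplit]
      rw [Finset.centerMass, Finset.centerMass, smul_smul, smul_smul, ← hα,
        mul_inv_cancel₀ h0, hsum2, mul_inv_cancel₀ (by intro h; apply h1; linarith),
        one_smul, one_smul]

end Aux

section Glue

variable (V1 V2 : Type*) (v2 : V2)

/-- Extend a vector on `V1` by zero. -/
noncomputable def glueL : (V1 → ℝ) →ₗ[ℝ] (OneSumVerts V1 V2 v2 → ℝ) where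
  toFun x := Sum.elim x 0
  map_add' x y := by funext p; cases p <;> simp
  map_smul' c x := by funext p; cases p <;> simp

/-- Extend a vector on `V2` by zero (restricted to the vertices other than `v2`). -/
noncomputable def glueR : (V2 → ℝ) →ₗ[ℝ] (OneSumVerts V1 V2 v2 → ℝ) where
  toFun y := Sum.elim 0 (fun w => y w.1)
  map_add' x y := by funext p; cases p <;> simp
  map_smul' c x := by funext p; cases p <;> simp

@[simp] lemma glueL_inl (x : V1 → ℝ) (u : V1) : glueL V1 V2 v2 x (Sum.inl u) = x u := rfl

@[simp] lemma glueL_inr (x : V1 → ℝ) (w : {v : V2 // v ≠ v2}) :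
    glueL V1 V2 v2 x (Sum.inr w) = 0 := rfl

@[simp] lemma glueR_inl (y : V2 → ℝ) (u : V1) : glueR V1 V2 v2 y (Sum.inl u) = 0 := rfl

@[simp] lemma glueR_inr (y : V2 → ℝ) (w : {v : V2 // v ≠ v2}) :
    glueR V1 V2 v2 y (Sum.inr w) = y w.1 := rfl

end Glue

section Chi

variable {V1 V2 : Type*} [DecidableEq V1] [DecidableEq V2]
  (G1 : SimpleGraph V1) (G2 : SimpleGraph V2) (v1 : V1) (v2 : V2)

lemma glue_chi (A : Finset V1) (B : Finset V2) (hA : IsStable G1 A) (hB : IsStable G2 B)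
    (hc : v1 ∈ A ↔ v2 ∈ B) :
    ∃ S : Finset (OneSumVerts V1 V2 v2), IsStable (oneSumGraph G1 G2 v1 v2) S ∧
      glueL V1 V2 v2 (chi A) + glueR V1 V2 v2 (chi B) = chi S := by
  classical
  set S : Finset (OneSumVerts V1 V2 v2) :=
    A.image Sum.inl ∪ (B.subtype (· ≠ v2)).image Sum.inr with hSdef
  have hl : ∀ u : V1, (Sum.inl u : OneSumVerts V1 V2 v2) ∈ S ↔ u ∈ A := by
    intro u; simp [hSdef]
  have hr : ∀ w : {v : V2 // v ≠ v2}, (Sum.inr w : OneSumVerts V1 V2 v2) ∈ S ↔ w.1 ∈ B := by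
    intro w; simp [hSdef, Finset.mem_subtype]
  refine ⟨S, ?_, ?_⟩
  · intro p hp q hq hadj
    obtain ⟨hne, hrel⟩ := (SimpleGraph.fromRel_adj _ p q).1 hadj
    cases p with
    | inl u =>
      cases q with
      | inl w =>
        have h : G1.Adj u w ∨ G1.Adj w u := hrel
        rcases h with h | h
        · exact hA u ((hl u).1 hp) w ((hl w).1 hq) h
        · exact hA w ((hl w).1 hq) u ((hl u).1 hp) h
      | inr w =>
        have h : (u = v1 ∧ G2.Adj v2 w.1) ∨ (u = v1 ∧ G2.Adj v2 w.1) := hrel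
        obtain ⟨rfl, h2⟩ := h.elim id id
        exact hB v2 (hc.1 ((hl _).1 hp)) w.1 ((hr w).1 hq) h2
    | inr u =>
      cases q with
      | inl w =>
        have h : (w = v1 ∧ G2.Adj v2 u.1) ∨ (w = v1 ∧ G2.Adj v2 u.1) := hrel
        obtain ⟨rfl, h2⟩ := h.elim id id
        exact hB v2 (hc.1 ((hl _).1 hq)) u.1 ((hr u).1 hp) h2
      | inr w =>
        have h : G2.Adj u.1 w.1 ∨ G2.Adj w.1 u.1 := hrel
        rcases h with h | h
        · exact hB u.1 ((hr u).1 hp) w.1 ((hr w).1 hq) h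
        · exact hB w.1 ((hr w).1 hq) u.1 ((hr u).1 hp) h
  · funext p
    cases p with
    | inl u => simp [chi, hl u]
    | inr w => simp [chi, hr w]

end Chi

lemma isStable_singleton {V : Type*} (G : SimpleGraph V) (v : V) : IsStable G {v} := by
  intro u hu w hw h
  simp only [Finset.mem_singleton] at hu hw
  subst hu; subst hw
  exact G.loopless.irrefl _ h

lemma isStable_empty {V : Type*} (G : SimpleGraph V) : IsStable G ∅ := by
  intro u hu
  simp at hu

open Pointwise

/-- Chvátal's theorem for 1-sums: the stable set polytope of the 1-sum of two graphs
is the 1-sum of their stable set polytopes (points of the combined polytope are exactly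
the compatible pairs of points of the two polytopes, with the identified coordinate shared). -/
theorem stmt10 {V1 V2 : Type*} [Fintype V1] [DecidableEq V1] [Fintype V2] [DecidableEq V2]
    (G1 : SimpleGraph V1) (G2 : SimpleGraph V2) (v1 : V1) (v2 : V2) :
    Pstab (oneSumGraph G1 G2 v1 v2) =
      {z : OneSumVerts V1 V2 v2 → ℝ |
        ∃ x ∈ Pstab G1, ∃ y ∈ Pstab G2, x v1 = y v2 ∧
          (∀ u : V1, z (Sum.inl u) = x u) ∧
          (∀ w : {v : V2 // v ≠ v2}, z (Sum.inr w) = y w.1)} := by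
  classical
  apply Set.Subset.antisymm
  · -- easy direction: Pstab of the one-sum is contained in the set of glued pairs
    have hconv : Convex ℝ {z : OneSumVerts V1 V2 v2 → ℝ |
        ∃ x ∈ Pstab G1, ∃ y ∈ Pstab G2, x v1 = y v2 ∧
          (∀ u : V1, z (Sum.inl u) = x u) ∧
          (∀ w : {v : V2 // v ≠ v2}, z (Sum.inr w) = y w.1)} := by
      rintro za ⟨xa, hxa, ya, hya, ea, hla, hra⟩ zb ⟨xb, hxb, yb, hyb, eb, hlb, hrb⟩ a b ha hb hab
      refine ⟨a • xa + b • xb, ?_, a • ya + b • yb, ?_, ?_, ?_, ?_⟩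
      · exact (convex_convexHull ℝ _) hxa hxb ha hb hab
      · exact (convex_convexHull ℝ _) hya hyb ha hb hab
      · simp only [Pi.add_apply, Pi.smul_apply, smul_eq_mul, ea, eb]
      · intro u; simp [hla u, hlb u]
      · intro w; simp [hra w, hrb w]
    have hgen : {x : OneSumVerts V1 V2 v2 → ℝ |
        ∃ S, IsStable (oneSumGraph G1 G2 v1 v2) S ∧ x = chi S} ⊆
        {z : OneSumVerts V1 V2 v2 → ℝ |
        ∃ x ∈ Pstab G1, ∃ y ∈ Pstab G2, x v1 = y v2 ∧
          (∀ u : V1, z (Sum.inl u) = x u) ∧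
          (∀ w : {v : V2 // v ≠ v2}, z (Sum.inr w) = y w.1)} := by
      rintro _ ⟨S, hS, rfl⟩
      set A : Finset V1 := Finset.univ.filter (fun u => Sum.inl u ∈ S) with hAdef
      set B : Finset V2 := Finset.univ.filter
        (fun w : V2 => if h : w = v2 then Sum.inl v1 ∈ S
          else (Sum.inr ⟨w, h⟩ : OneSumVerts V1 V2 v2) ∈ S) with hBdef
      have memA : ∀ u : V1, u ∈ A ↔ Sum.inl u ∈ S := by
        intro u; simp [hAdef]
      have memB2 : v2 ∈ B ↔ Sum.inl v1 ∈ S := by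
        simp [hBdef]
      have memBne : ∀ (w : V2) (h : w ≠ v2),
          w ∈ B ↔ (Sum.inr ⟨w, h⟩ : OneSumVerts V1 V2 v2) ∈ S := by
        intro w h; simp [hBdef, dif_neg h]
      have hstabA : IsStable G1 A := by
        intro u hu w hw hadj
        exact hS _ ((memA u).1 hu) _ ((memA w).1 hw)
          ⟨fun hh => hadj.ne (Sum.inl.inj hh), Or.inl hadj⟩
      have hstabB : IsStable G2 B := by
        intro u hu w hw hadj
        by_cases hu2 : u = v2
        · have hw2 : w ≠ v2 := fun h => hadj.ne (hu2.trans h.symm)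
          have hu' : v2 ∈ B := hu2 ▸ hu
          have hadj' : G2.Adj v2 w := hu2 ▸ hadj
          exact hS _ (memB2.1 hu') _ ((memBne w hw2).1 hw)
            ⟨by simp, Or.inl ⟨rfl, hadj'⟩⟩
        · by_cases hw2 : w = v2
          · have hw' : v2 ∈ B := hw2 ▸ hw
            have hadj' : G2.Adj v2 u := hw2 ▸ hadj.symm
            exact hS _ ((memBne u hu2).1 hu) _ (memB2.1 hw')
              ⟨by simp, Or.inl ⟨rfl, hadj'⟩⟩
          · exact hS _ ((memBne u hu2).1 hu) _ ((memBne w hw2).1 hw)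
              ⟨by simp [Subtype.ext_iff, hadj.ne], Or.inl hadj⟩
      refine ⟨chi A, subset_convexHull ℝ _ ⟨A, hstabA, rfl⟩,
        chi B, subset_convexHull ℝ _ ⟨B, hstabB, rfl⟩, ?_, ?_, ?_⟩
      · simp [chi, memA v1, memB2]
      · intro u; simp [chi, memA u]
      · intro w
        have := memBne w.1 w.2
        simp [chi, this]
    exact convexHull_min hgen hconv
  · -- hard direction
    rintro z ⟨x, hx, y, hy, hxy, hzl, hzr⟩
    set D1 : Set (V1 → ℝ) := {a | ∃ S, IsStable G1 S ∧ v1 ∈ S ∧ a = chi S} with hD1def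
    set D0 : Set (V1 → ℝ) := {a | ∃ S, IsStable G1 S ∧ v1 ∉ S ∧ a = chi S} with hD0def
    set E1 : Set (V2 → ℝ) := {a | ∃ S, IsStable G2 S ∧ v2 ∈ S ∧ a = chi S} with hE1def
    set E0 : Set (V2 → ℝ) := {a | ∃ S, IsStable G2 S ∧ v2 ∉ S ∧ a = chi S} with hE0def
    have hD1ne : D1.Nonempty := ⟨chi {v1}, {v1}, isStable_singleton G1 v1, Finset.mem_singleton_self v1, rfl⟩
    have hD0ne : D0.Nonempty := ⟨chi ∅, ∅, isStable_empty G1, Finset.notMem_empty v1, rfl⟩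
    have hE1ne : E1.Nonempty := ⟨chi {v2}, {v2}, isStable_singleton G2 v2, Finset.mem_singleton_self v2, rfl⟩
    have hE0ne : E0.Nonempty := ⟨chi ∅, ∅, isStable_empty G2, Finset.notMem_empty v2, rfl⟩
    have hxsplit : x ∈ convexHull ℝ (D1 ∪ D0) := by
      have hsets : {a : V1 → ℝ | ∃ S, IsStable G1 S ∧ a = chi S} = D1 ∪ D0 := by
        ext a
        constructor
        · rintro ⟨S, hS, rfl⟩
          by_cases h : v1 ∈ S
          · exact Or.inl ⟨S, hS, h, rfl⟩
          · exact Or.inr ⟨S, hS, h, rfl⟩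
        · rintro (⟨S, hS, -, rfl⟩ | ⟨S, hS, -, rfl⟩) <;> exact ⟨S, hS, rfl⟩
      rw [← hsets]; exact hx
    have hysplit : y ∈ convexHull ℝ (E1 ∪ E0) := by
      have hsets : {a : V2 → ℝ | ∃ S, IsStable G2 S ∧ a = chi S} = E1 ∪ E0 := by
        ext a
        constructor
        · rintro ⟨S, hS, rfl⟩
          by_cases h : v2 ∈ S
          · exact Or.inl ⟨S, hS, h, rfl⟩
          · exact Or.inr ⟨S, hS, h, rfl⟩
        · rintro (⟨S, hS, -, rfl⟩ | ⟨S, hS, -, rfl⟩) <;> exact ⟨S, hS, rfl⟩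
      rw [← hsets]; exact hy
    obtain ⟨hα0, hα1, p1, hp1, q1, hq1, hxeq⟩ :=
      decomp_hull hD1ne hD0ne (LinearMap.proj v1)
        (by rintro s ⟨S, -, hv, rfl⟩; simp [chi, hv])
        (by rintro s ⟨S, -, hv, rfl⟩; simp [chi, hv]) hxsplit
    obtain ⟨-, -, p2, hp2, q2, hq2, hyeq⟩ :=
      decomp_hull hE1ne hE0ne (LinearMap.proj v2)
        (by rintro s ⟨S, -, hv, rfl⟩; simp [chi, hv])
        (by rintro s ⟨S, -, hv, rfl⟩; simp [chi, hv]) hysplit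
    simp only [LinearMap.proj_apply] at hα0 hα1 hxeq hyeq
    rw [← hxy] at hyeq
    have key : ∀ (A1 : Set (V1 → ℝ)) (A2 : Set (V2 → ℝ)) (b : Bool),
        (∀ a ∈ A1, ∃ S, IsStable G1 S ∧ (v1 ∈ S ↔ b = true) ∧ a = chi S) →
        (∀ a ∈ A2, ∃ S, IsStable G2 S ∧ (v2 ∈ S ↔ b = true) ∧ a = chi S) →
        ∀ p ∈ convexHull ℝ A1, ∀ q ∈ convexHull ℝ A2,
          glueL V1 V2 v2 p + glueR V1 V2 v2 q ∈ Pstab (oneSumGraph G1 G2 v1 v2) := by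
      intro A1 A2 b hA1 hA2 p hp q hq
      have h1 : glueL V1 V2 v2 p ∈ convexHull ℝ ((glueL V1 V2 v2) '' A1) := by
        rw [← LinearMap.image_convexHull]; exact ⟨p, hp, rfl⟩
      have h2 : glueR V1 V2 v2 q ∈ convexHull ℝ ((glueR V1 V2 v2) '' A2) := by
        rw [← LinearMap.image_convexHull]; exact ⟨q, hq, rfl⟩
      have h3 := Set.add_mem_add h1 h2
      rw [← convexHull_add] at h3
      have hsub : (glueL V1 V2 v2) '' A1 + (glueR V1 V2 v2) '' A2 ⊆
          {a : OneSumVerts V1 V2 v2 → ℝ |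
            ∃ S, IsStable (oneSumGraph G1 G2 v1 v2) S ∧ a = chi S} := by
        rintro r hr
        rw [Set.mem_add] at hr
        obtain ⟨a', ⟨a, ha, rfl⟩, c', ⟨c, hc, rfl⟩, rfl⟩ := hr
        obtain ⟨A, hAs, hAv, rfl⟩ := hA1 a ha
        obtain ⟨B, hBs, hBv, rfl⟩ := hA2 c hc
        obtain ⟨S, hSs, hSe⟩ := glue_chi G1 G2 v1 v2 A B hAs hBs (hAv.trans hBv.symm)
        exact ⟨S, hSs, hSe⟩
      exact convexHull_mono hsub h3
    have k1 := key D1 E1 true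
      (by rintro a ⟨S, h1, h2, h3⟩; exact ⟨S, h1, by simp [h2], h3⟩)
      (by rintro a ⟨S, h1, h2, h3⟩; exact ⟨S, h1, by simp [h2], h3⟩) p1 hp1 p2 hp2
    have k0 := key D0 E0 false
      (by rintro a ⟨S, h1, h2, h3⟩; exact ⟨S, h1, by simp [h2], h3⟩)
      (by rintro a ⟨S, h1, h2, h3⟩; exact ⟨S, h1, by simp [h2], h3⟩) q1 hq1 q2 hq2
    set c := x v1 with hc
    have hzeq : z = c • (glueL V1 V2 v2 p1 + glueR V1 V2 v2 p2) +
        (1 - c) • (glueL V1 V2 v2 q1 + glueR V1 V2 v2 q2) := by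
      have hz : z = glueL V1 V2 v2 x + glueR V1 V2 v2 y := by
        funext r
        cases r with
        | inl u => simp [hzl u]
        | inr w => simp [hzr w]
      rw [hz, hxeq, hyeq, map_add, map_add, map_smul, map_smul, map_smul, map_smul]
      module
    rw [hzeq]
    exact (convex_convexHull ℝ _) k1 k0 hα0 (by linarith) (by ring)
end

section
/- Let P ⊆ [0,1]^n be a polytope whose integer points are exactly the vertices of an integral polytope conv(P ∩ {0,1}^n) = P. Then P has the persistency property: for every c ∈ R^n and every c-maximal point x ∈ P, there exists a c-maximal integer point y ∈ P ∩ {0,1}^n with y_i = x_i for all i with x_i ∈ {0,1}. -/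
lemma aux13 {ι : Type*} (t : Finset ι) (w a : ι → ℝ) (M : ℝ)
    (hw0 : ∀ j ∈ t, 0 ≤ w j) (hw1 : ∑ j ∈ t, w j = 1)
    (ha : ∀ j ∈ t, a j ≤ M) (heq : ∑ j ∈ t, w j * a j = M) :
    ∀ j ∈ t, w j ≠ 0 → a j = M := by
  have h0 : ∑ j ∈ t, w j * (M - a j) = 0 := by
    have h1 : ∑ j ∈ t, w j * (M - a j)
        = (∑ j ∈ t, w j) * M - ∑ j ∈ t, w j * a j := by
      rw [Finset.sum_mul, ← Finset.sum_sub_distrib]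
      exact Finset.sum_congr rfl fun j _ => by ring
    rw [h1, hw1, heq]; ring
  intro j hj hwj
  have hterm := (Finset.sum_eq_zero_iff_of_nonneg
    (fun j hj => mul_nonneg (hw0 j hj) (sub_nonneg.2 (ha j hj)))).1 h0 j hj
  rcases mul_eq_zero.1 hterm with h | h
  · exact absurd h hwj
  · linarith

/-- Integral polytopes in the 0/1 cube have the persistency property. -/
theorem stmt13 {n : ℕ} (P : Set (Fin n → ℝ))
    (hbox : P ⊆ {x | ∀ i, 0 ≤ x i ∧ x i ≤ 1})
    (hintegral : P = convexHull ℝ {x ∈ P | ∀ i, x i = 0 ∨ x i = 1})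
    (c : Fin n → ℝ) (x : Fin n → ℝ) (hx : x ∈ P)
    (hmax : ∀ y ∈ P, ∑ i, c i * y i ≤ ∑ i, c i * x i) :
    ∃ y ∈ P, (∀ i, y i = 0 ∨ y i = 1) ∧
      (∀ z ∈ P, (∀ i, z i = 0 ∨ z i = 1) → ∑ i, c i * z i ≤ ∑ i, c i * y i) ∧
      (∀ i, (x i = 0 ∨ x i = 1) → y i = x i) := by
  have hV : x ∈ convexHull ℝ {x ∈ P | ∀ i, x i = 0 ∨ x i = 1} := hintegral ▸ hx
  rw [convexHull_eq] at hV
  obtain ⟨ι, t, w, z, hw0, hw1, hz, hcm⟩ := hV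
  rw [Finset.centerMass_eq_of_sum_1 _ _ hw1] at hcm
  have hzP : ∀ j ∈ t, z j ∈ P := fun j hj => (hz j hj).1
  have hzI : ∀ j ∈ t, ∀ i, z j i = 0 ∨ z j i = 1 := fun j hj => (hz j hj).2
  have hcoord : ∀ i, ∑ j ∈ t, w j * z j i = x i := by
    intro i
    have := congrFun hcm i
    simpa [Finset.sum_apply] using this
  obtain ⟨j0, hj0, hwj0⟩ : ∃ j ∈ t, w j ≠ 0 := by
    by_contra h
    push_neg at h
    rw [Finset.sum_eq_zero h] at hw1
    norm_num at hw1
  refine ⟨z j0, hzP j0 hj0, hzI j0 hj0, ?_, ?_⟩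
  · intro v hv _
    have h1 : ∑ i, c i * z j0 i = ∑ i, c i * x i := by
      refine aux13 t w (fun j => ∑ i, c i * z j i) (∑ i, c i * x i) hw0 hw1
        (fun j hj => hmax _ (hzP j hj)) ?_ j0 hj0 hwj0
      calc ∑ j ∈ t, w j * ∑ i, c i * z j i
          = ∑ j ∈ t, ∑ i, c i * (w j * z j i) := by
            refine Finset.sum_congr rfl fun j _ => ?_
            rw [Finset.mul_sum]
            exact Finset.sum_congr rfl fun i _ => by ring
        _ = ∑ i, ∑ j ∈ t, c i * (w j * z j i) := Finset.sum_comm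
        _ = ∑ i, c i * ∑ j ∈ t, w j * z j i := by
            exact Finset.sum_congr rfl fun i _ => (Finset.mul_sum _ _ _).symm
        _ = ∑ i, c i * x i := by simp [hcoord]
    rw [h1]
    exact hmax v hv
  · intro i hi
    rcases hi with h0 | h1
    · have hsum : ∑ j ∈ t, w j * -(z j i) = 0 := by
        have : ∑ j ∈ t, w j * -(z j i) = -∑ j ∈ t, w j * z j i := by
          simp [mul_neg]
        rw [this, hcoord i, h0, neg_zero]
      have h := aux13 t w (fun j => -(z j i)) 0 hw0 hw1
        (fun j hj => neg_nonpos.2 (hbox (hzP j hj) i).1) hsum j0 hj0 hwj0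
      have h' : z j0 i = 0 := by simpa using h
      rw [h', h0]
    · have h := aux13 t w (fun j => z j i) 1 hw0 hw1
        (fun j hj => (hbox (hzP j hj) i).2) (by rw [hcoord i, h1]) j0 hj0 hwj0
      have h' : z j0 i = 1 := by simpa using h
      rw [h', h1]
end

section
/- The relaxation R(G) = {x ∈ R_edge(G) : x(C) ≤ 1.4 for every 3-clique C of G} has the persistency property for every graph G: for every objective c and every c-maximal point x of R(G), there is a c-maximal stable set of G containing all vertices v with x_v = 1 and avoiding all vertices v with x_v = 0. -/
/-- The edge relaxation strengthened by the (weak) triangle inequalities `x(C) ≤ 1.4`. -/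
def RtriA {V : Type*} (G : SimpleGraph V) : Set (V → ℝ) :=
  {x | (∀ v, 0 ≤ x v ∧ x v ≤ 1) ∧ (∀ u v, G.Adj u v → x u + x v ≤ 1) ∧
    ∀ u v w, G.Adj u v → G.Adj v w → G.Adj u w → x u + x v + x w ≤ 1.4}

/-- The relaxation `R^{(A)}` has the persistency property for every graph. -/
theorem stmt14 {V : Type*} [Fintype V] [DecidableEq V] (G : SimpleGraph V)
    (c : V → ℝ) (x : V → ℝ) (hx : x ∈ RtriA G)
    (hmax : ∀ y ∈ RtriA G, ∑ v, c v * y v ≤ ∑ v, c v * x v) :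
    ∃ S : Finset V, IsStable G S ∧
      (∀ T : Finset V, IsStable G T → ∑ v ∈ T, c v ≤ ∑ v ∈ S, c v) ∧
      (∀ v, x v = 1 → v ∈ S) ∧ (∀ v, x v = 0 → v ∉ S) := by
  classical
  obtain ⟨hbox, hedge, htri⟩ := hx
  -- pick a c-maximal stable set T₀
  obtain ⟨T₀, hT₀mem, hT₀max⟩ :=
    Finset.exists_max_image
      ((Finset.univ : Finset V).powerset.filter (fun S => IsStable G S))
      (fun S => ∑ v ∈ S, c v)
      ⟨∅, by simp [IsStable]⟩
  have hT₀stable : IsStable G T₀ := (Finset.mem_filter.1 hT₀mem).2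
  have hT₀top : ∀ T : Finset V, IsStable G T → ∑ v ∈ T, c v ≤ ∑ v ∈ T₀, c v := by
    intro T hT
    exact hT₀max T (Finset.mem_filter.2 ⟨Finset.mem_powerset.2 (Finset.subset_univ T), hT⟩)
  -- a positive ε smaller than all positive slacks 1 - x v and than 0.4
  set E : Finset ℝ :=
    insert (0.4 : ℝ) ((Finset.univ.filter (fun v => x v < 1)).image (fun v => 1 - x v)) with hE
  have hEne : E.Nonempty := ⟨0.4, Finset.mem_insert_self _ _⟩
  set ε : ℝ := E.min' hEne with hεdef
  have hε04 : ε ≤ 0.4 := Finset.min'_le _ _ (Finset.mem_insert_self _ _)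
  have hεpos : 0 < ε := by
    have hm : ε ∈ E := Finset.min'_mem E hEne
    rcases Finset.mem_insert.1 hm with h | h
    · rw [h]; norm_num
    · obtain ⟨v, hv, hv2⟩ := Finset.mem_image.1 h
      have := (Finset.mem_filter.1 hv).2
      linarith [hv2]
  have hεslack : ∀ v, x v < 1 → ε ≤ 1 - x v := by
    intro v hv
    refine Finset.min'_le _ _ ?_
    exact Finset.mem_insert_of_mem (Finset.mem_image.2 ⟨v, Finset.mem_filter.2 ⟨Finset.mem_univ v, hv⟩, rfl⟩)
  -- the perturbed point
  set y : V → ℝ := fun v =>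
    if v ∈ T₀ ∧ x v = 0 then ε else if x v = 1 ∧ v ∉ T₀ then 1 - ε else x v with hy
  have hyA : ∀ v, (v ∈ T₀ ∧ x v = 0) → y v = ε := by
    intro v hv; simp only [hy, if_pos hv]
  have hyB : ∀ v, (x v = 1 ∧ v ∉ T₀) → y v = 1 - ε := by
    intro v hv
    have : ¬ (v ∈ T₀ ∧ x v = 0) := by rintro ⟨_, h0⟩; rw [h0] at hv; exact one_ne_zero hv.1.symm
    simp only [hy, if_neg this, if_pos hv]
  have hyC : ∀ v, ¬ (v ∈ T₀ ∧ x v = 0) → ¬ (x v = 1 ∧ v ∉ T₀) → y v = x v := by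
    intro v h1 h2; simp only [hy, if_neg h1, if_neg h2]
  have hyle : ∀ v, ¬ (v ∈ T₀ ∧ x v = 0) → y v ≤ x v := by
    intro v h1
    by_cases h2 : x v = 1 ∧ v ∉ T₀
    · rw [hyB v h2, h2.1]; linarith
    · rw [hyC v h1 h2]
  -- feasibility of y
  have hyfeas : y ∈ RtriA G := by
    refine ⟨?_, ?_, ?_⟩
    · intro v
      by_cases h1 : v ∈ T₀ ∧ x v = 0
      · rw [hyA v h1]; constructor <;> linarith
      · by_cases h2 : x v = 1 ∧ v ∉ T₀
        · rw [hyB v h2]; constructor <;> linarith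
        · rw [hyC v h1 h2]; exact hbox v
    · intro u v huv
      by_cases hu : u ∈ T₀ ∧ x u = 0 <;> by_cases hv : v ∈ T₀ ∧ x v = 0
      · exact absurd huv (hT₀stable u hu.1 v hv.1)
      · -- u in A, v not in A
        rw [hyA u hu]
        by_cases hv1 : x v = 1
        · by_cases hvT : v ∈ T₀
          · exact absurd huv (hT₀stable u hu.1 v hvT)
          · rw [hyB v ⟨hv1, hvT⟩]; linarith
        · have : x v < 1 := lt_of_le_of_ne (hbox v).2 hv1
          have h2 : ¬ (x v = 1 ∧ v ∉ T₀) := by rintro ⟨h, _⟩; exact hv1 h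
          rw [hyC v hv h2]
          have := hεslack v this; linarith
      · -- v in A, u not in A
        rw [hyA v hv]
        by_cases hu1 : x u = 1
        · by_cases huT : u ∈ T₀
          · exact absurd huv (hT₀stable u huT v hv.1)
          · rw [hyB u ⟨hu1, huT⟩]; linarith
        · have : x u < 1 := lt_of_le_of_ne (hbox u).2 hu1
          have h2 : ¬ (x u = 1 ∧ u ∉ T₀) := by rintro ⟨h, _⟩; exact hu1 h
          rw [hyC u hu h2]
          have := hεslack u this; linarith
      · -- neither raised
        by_cases hu2 : x u = 1 ∧ u ∉ T₀ <;> by_cases hv2 : x v = 1 ∧ v ∉ T₀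
        · have := hedge u v huv; rw [hu2.1, hv2.1] at this; linarith
        · rw [hyB u hu2, hyC v hv hv2]
          have := hedge u v huv; rw [hu2.1] at this
          have := (hbox v).1; linarith
        · rw [hyC u hu hu2, hyB v hv2]
          have := hedge u v huv; rw [hv2.1] at this
          have := (hbox u).1; linarith
        · rw [hyC u hu hu2, hyC v hv hv2]; exact hedge u v huv
    · intro u v w huv hvw huw
      by_cases hu : u ∈ T₀ ∧ x u = 0
      · -- v and w cannot be raised
        have hv : ¬ (v ∈ T₀ ∧ x v = 0) := by
          rintro ⟨hvT, _⟩; exact hT₀stable u hu.1 v hvT huv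
        have hw : ¬ (w ∈ T₀ ∧ x w = 0) := by
          rintro ⟨hwT, _⟩; exact hT₀stable u hu.1 w hwT huw
        have h1 := hyle v hv
        have h2 := hyle w hw
        have h3 := hedge v w hvw
        rw [hyA u hu]; linarith
      · by_cases hv : v ∈ T₀ ∧ x v = 0
        · have hw : ¬ (w ∈ T₀ ∧ x w = 0) := by
            rintro ⟨hwT, _⟩; exact hT₀stable v hv.1 w hwT hvw
          have h1 := hyle u hu
          have h2 := hyle w hw
          have h3 := hedge u w huw
          rw [hyA v hv]; linarith
        · by_cases hw : w ∈ T₀ ∧ x w = 0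
          · have h1 := hyle u hu
            have h2 := hyle v hv
            have h3 := hedge u v huv
            rw [hyA w hw]; linarith
          · have h1 := hyle u hu
            have h2 := hyle v hv
            have h3 := hyle w hw
            have h4 := htri u v w huv hvw huw
            linarith
  -- the key inequality from optimality
  set A : Finset V := Finset.univ.filter (fun v => v ∈ T₀ ∧ x v = 0) with hA
  set B : Finset V := Finset.univ.filter (fun v => x v = 1 ∧ v ∉ T₀) with hB
  have hdiff : ∑ v, c v * y v - ∑ v, c v * x v
      = ε * ((∑ v ∈ A, c v) - (∑ v ∈ B, c v)) := by
    rw [← Finset.sum_sub_distrib]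
    have : ∀ v ∈ (Finset.univ : Finset V),
        c v * y v - c v * x v
          = (if v ∈ T₀ ∧ x v = 0 then ε * c v else 0)
            - (if x v = 1 ∧ v ∉ T₀ then ε * c v else 0) := by
      intro v _
      by_cases h1 : v ∈ T₀ ∧ x v = 0
      · have h2 : ¬ (x v = 1 ∧ v ∉ T₀) := by
          rintro ⟨h, _⟩; rw [h1.2] at h; exact one_ne_zero h.symm
        rw [hyA v h1, if_pos h1, if_neg h2, h1.2]; ring
      · by_cases h2 : x v = 1 ∧ v ∉ T₀
        · rw [hyB v h2, if_neg h1, if_pos h2, h2.1]; ring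
        · rw [hyC v h1 h2, if_neg h1, if_neg h2]; ring
    rw [Finset.sum_congr rfl this, Finset.sum_sub_distrib,
      ← Finset.sum_filter, ← Finset.sum_filter, ← hA, ← hB,
      ← Finset.mul_sum, ← Finset.mul_sum]
    ring
  have hkey : ∑ v ∈ A, c v ≤ ∑ v ∈ B, c v := by
    have h1 := hmax y hyfeas
    have h2 : ε * ((∑ v ∈ A, c v) - (∑ v ∈ B, c v)) ≤ 0 := by linarith [hdiff]
    nlinarith
  -- the stable set
  refine ⟨T₀.filter (fun v => ¬ x v = 0) ∪ Finset.univ.filter (fun v => x v = 1), ?_, ?_, ?_, ?_⟩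
  · intro u hu v hv hadj
    rcases Finset.mem_union.1 hu with hu' | hu' <;> rcases Finset.mem_union.1 hv with hv' | hv'
    · exact hT₀stable u (Finset.mem_filter.1 hu').1 v (Finset.mem_filter.1 hv').1 hadj
    · have h1 := hedge u v hadj
      have h2 := (Finset.mem_filter.1 hv').2
      have h3 := (Finset.mem_filter.1 hu').2
      have := (hbox u).1
      exact h3 (by linarith)
    · have h1 := hedge u v hadj
      have h2 := (Finset.mem_filter.1 hu').2
      have h3 := (Finset.mem_filter.1 hv').2
      have := (hbox v).1
      exact h3 (by linarith)
    · have h1 := hedge u v hadj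
      have h2 := (Finset.mem_filter.1 hu').2
      have h3 := (Finset.mem_filter.1 hv').2
      rw [h2, h3] at h1; linarith
  · intro T hT
    refine le_trans (hT₀top T hT) ?_
    -- c(T₀) ≤ c(S)
    set T₀' : Finset V := T₀.filter (fun v => ¬ x v = 0) with hT₀'
    set P : Finset V := Finset.univ.filter (fun v => x v = 1) with hP
    have hsplit : ∑ v ∈ T₀.filter (fun v => x v = 0), c v + ∑ v ∈ T₀', c v = ∑ v ∈ T₀, c v :=
      Finset.sum_filter_add_sum_filter_not T₀ (fun v => x v = 0) c
    have hAeq : T₀.filter (fun v => x v = 0) = A := by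
      ext v; simp [hA, Finset.mem_filter, and_comm]
    have hunion : ∑ v ∈ T₀' ∪ P, c v + ∑ v ∈ T₀' ∩ P, c v = ∑ v ∈ T₀', c v + ∑ v ∈ P, c v :=
      Finset.sum_union_inter
    have hPsplit : ∑ v ∈ P.filter (fun v => v ∈ T₀), c v + ∑ v ∈ P.filter (fun v => v ∉ T₀), c v
        = ∑ v ∈ P, c v := Finset.sum_filter_add_sum_filter_not P (fun v => v ∈ T₀) c
    have hBeq : P.filter (fun v => v ∉ T₀) = B := by
      ext v; simp [hB, hP, Finset.mem_filter]
    have hPTeq : T₀' ∩ P = P.filter (fun v => v ∈ T₀) := by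
      ext v
      simp only [hT₀', hP, Finset.mem_inter, Finset.mem_filter, Finset.mem_univ, true_and]
      constructor
      · rintro ⟨⟨h1, _⟩, h3⟩; exact ⟨h3, h1⟩
      · rintro ⟨h1, h2⟩; exact ⟨⟨h2, by rw [h1]; norm_num⟩, h1⟩
    rw [hAeq] at hsplit
    rw [hPTeq] at hunion
    rw [hBeq] at hPsplit
    linarith
  · intro v hv
    exact Finset.mem_union.2 (Or.inr (Finset.mem_filter.2 ⟨Finset.mem_univ v, hv⟩))
  · intro v hv hmem
    rcases Finset.mem_union.1 hmem with h | h
    · exact (Finset.mem_filter.1 h).2 hv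
    · have := (Finset.mem_filter.1 h).2
      rw [hv] at this; exact one_ne_zero this.symm
end
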